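/- Define φ₀(0) = 1/β₁ and φ_k(0) = (-1)^k (1/β_{k+1}) ∏_{j=1}^k (α_j/β_j), and define ψ₀(0) = 1/(α₁β₁) and ψ_k(0) = (1/α_{k+1})(φ_k(0) - β_{k+1} ψ_{k-1}(0)). If all α_j > 0 and β_j > 0, then φ_k(0) and ψ_k(0) have the same sign for every k ≥ 0; in particular φ_k(0)⁻¹ ψ_k(0) > 0. -/
import Mathlib


open Finset

/-- the constant terms `φ_k(0)` and `ψ_k(0)` of the Lanczos polynomials
have the same sign when all `α_j, β_j > 0`; in particular `φ_k(0)⁻¹ ψ_k(0) > 0`. -/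
theorem phi_psi_same_sign
    (α β : ℕ → ℝ) (hα : ∀ j, 0 < α j) (hβ : ∀ j, 0 < β j)
    (φ ψ : ℕ → ℝ)
    (hφ : ∀ k, φ k = (-1 : ℝ) ^ k * (1 / β (k + 1)) * ∏ j ∈ Finset.Icc 1 k, α j / β j)
    (hψ0 : ψ 0 = 1 / (α 1 * β 1))
    (hψ : ∀ k, 1 ≤ k → ψ k = (1 / α (k + 1)) * (φ k - β (k + 1) * ψ (k - 1))) :
    ∀ k, (φ k ≠ 0 ∧ (0 < φ k ↔ 0 < ψ k)) ∧ 0 < (φ k)⁻¹ * ψ k := by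
  have hP : ∀ k, 0 < (1 / β (k + 1)) * ∏ j ∈ Finset.Icc 1 k, α j / β j := by
    intro k
    apply mul_pos (div_pos one_pos (hβ _))
    exact Finset.prod_pos (fun j _ => div_pos (hα j) (hβ j))
  have hφP : ∀ k, (-1 : ℝ) ^ k * φ k = (1 / β (k + 1)) * ∏ j ∈ Finset.Icc 1 k, α j / β j := by
    intro k
    rw [hφ k, ← mul_assoc, ← mul_assoc, ← mul_pow]
    norm_num
  have hψpos : ∀ k, 0 < (-1 : ℝ) ^ k * ψ k := by
    intro k
    induction k with
    | zero => simpa [hψ0] using div_pos one_pos (mul_pos (hα 1) (hβ 1))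
    | succ n ih =>
      rw [hψ (n + 1) (Nat.le_add_left 1 n)]
      simp only [Nat.add_sub_cancel]
      have h1 : (-1 : ℝ) ^ (n + 1) * ((1 / α (n + 1 + 1)) * (φ (n + 1) - β (n + 1 + 1) * ψ n))
          = (1 / α (n + 1 + 1)) * (((-1 : ℝ) ^ (n + 1) * φ (n + 1)) + β (n + 1 + 1) * ((-1 : ℝ) ^ n * ψ n)) := by
        ring
      rw [h1, hφP (n + 1)]
      have := hP (n + 1)
      have hb := hβ (n + 1 + 1)
      have ha := hα (n + 1 + 1)
      positivity
  intro k
  have hpk := hP k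
  have hpsk := hψpos k
  have hφne : φ k ≠ 0 := by
    intro h
    have := hφP k
    rw [h, mul_zero] at this
    exact absurd this.symm (ne_of_gt hpk)
  have hne : ((-1:ℝ)^k) ≠ 0 := pow_ne_zero _ (by norm_num)
  have hinv : (φ k)⁻¹ * ψ k = ((-1 : ℝ) ^ k * ψ k) / ((-1 : ℝ) ^ k * φ k) := by
    rw [mul_div_mul_left _ _ hne, div_eq_inv_mul]
  have hprod : 0 < (φ k)⁻¹ * ψ k := by
    rw [hinv]
    exact div_pos hpsk (by rw [hφP k]; exact hpk)
  refine ⟨⟨hφne, ?_⟩, hprod⟩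
  constructor
  · intro h
    have : ψ k = φ k * ((φ k)⁻¹ * ψ k) := by field_simp
    rw [this]; exact mul_pos h hprod
  · intro h
    have hinvpos : 0 < (φ k)⁻¹ := by
      have : (φ k)⁻¹ = ((φ k)⁻¹ * ψ k) / ψ k := by field_simp
      rw [this]; exact div_pos hprod h
    exact inv_pos.mp hinvpos
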